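/- Let M be a finite set, v : 2^M → ℝ≥0 a monotone submodular valuation, n ≥ 1 an integer, and b ∈ (0,1]. Suppose there exist sets S_1, …, S_h ⊆ M and weights α_1, …, α_h > 0 with ∑_{r=1}^h α_r = 1, with ∑_{r : j ∈ S_r} α_r ≤ b for every j ∈ M, and with v(S_r) ≥ n·b for every r. Let A ⊆ M satisfy v(A) < n·b/3, and for each good j ∈ M \ A let C_j ⊆ A be an arbitrary subset. Then ∑_{j ∈ M \ A} min( 2·n·b/3, v(j | C_j) ) ≥ 2·n/3. -/

import Mathlib

open Finset

/-- Lower bound on the sum of capped marginals (the core of Lemma `lem:lower-bound`):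
given a fractional allocation supported on sets of value at least `n·b`, and a bundle
`A` of value less than `n·b/3`, the total capped marginal value of the remaining goods
(with respect to arbitrary subsets `C_j ⊆ A`) is at least `2n/3`. -/
theorem sum_capped_marginals_lower_bound
    {G : Type*} [Fintype G] [DecidableEq G]
    (v : Finset G → ℝ) (hnn : ∀ S, 0 ≤ v S) (hempty : v ∅ = 0)
    (hmono : ∀ S T : Finset G, S ⊆ T → v S ≤ v T)
    (hsub : ∀ (S T : Finset G) (j : G), S ⊆ T →
      v (T ∪ {j}) - v T ≤ v (S ∪ {j}) - v S)
    (n : ℕ) (hn : 1 ≤ n)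
    (b : ℝ) (hb0 : 0 < b) (hb1 : b ≤ 1)
    (h : ℕ) (S : Fin h → Finset G) (α : Fin h → ℝ)
    (hα : ∀ r, 0 < α r)
    (hαsum : (∑ r, α r) = 1)
    (hcov : ∀ j : G, ∑ r ∈ Finset.univ.filter (fun r : Fin h => j ∈ S r), α r ≤ b)
    (hval : ∀ r, v (S r) ≥ (n : ℝ) * b)
    (A : Finset G) (hA : v A < (n : ℝ) * b / 3)
    (C : G → Finset G) (hC : ∀ j, C j ⊆ A) :
    (∑ j ∈ Aᶜ, min (2 * (n : ℝ) * b / 3) (v (C j ∪ {j}) - v (C j)))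
      ≥ 2 * (n : ℝ) / 3 := by
  set m : G → ℝ := fun j => min (2 * (n : ℝ) * b / 3) (v (C j ∪ {j}) - v (C j)) with hm
  have hn1 : (1:ℝ) ≤ n := by exact_mod_cast hn
  have hcap0 : (0:ℝ) ≤ 2 * (n : ℝ) * b / 3 := by positivity
  have hm0 : ∀ j, 0 ≤ m j := by
    intro j
    refine le_min hcap0 ?_
    have := hmono (C j) (C j ∪ {j}) (subset_union_left)
    linarith
  -- subadditivity of marginals
  have key : ∀ T : Finset G, v (A ∪ T) ≤ v A + ∑ j ∈ T, (v (A ∪ {j}) - v A) := by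
    intro T
    induction T using Finset.induction_on with
    | empty => simp
    | @insert a T ha ih =>
      have h1 : v ((A ∪ T) ∪ {a}) - v (A ∪ T) ≤ v (A ∪ {a}) - v A :=
        hsub A (A ∪ T) a subset_union_left
      have h2 : A ∪ insert a T = (A ∪ T) ∪ {a} := by
        ext x; simp [or_comm, or_assoc, or_left_comm]
      rw [h2, Finset.sum_insert ha]
      linarith
  -- per-r bound
  have perr : ∀ r, 2 * (n : ℝ) * b / 3 ≤ ∑ j ∈ (S r) \ A, m j := by
    intro r
    by_cases hcase : ∃ j ∈ S r \ A, 2 * (n : ℝ) * b / 3 ≤ v (C j ∪ {j}) - v (C j)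
    · obtain ⟨j, hj, hjv⟩ := hcase
      have : m j = 2 * (n : ℝ) * b / 3 := min_eq_left hjv
      calc 2 * (n : ℝ) * b / 3 = m j := this.symm
        _ ≤ ∑ j ∈ (S r) \ A, m j :=
          Finset.single_le_sum (fun i _ => hm0 i) hj
    · push_neg at hcase
      have hmeq : ∀ j ∈ S r \ A, m j = v (C j ∪ {j}) - v (C j) := fun j hj =>
        min_eq_right (le_of_lt (hcase j hj))
      have hAeq : A ∪ (S r \ A) = A ∪ S r := Finset.union_sdiff_self_eq_union
      have h3 : v (S r) ≤ v (A ∪ S r) := hmono _ _ subset_union_right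
      have h4 := key (S r \ A)
      rw [hAeq] at h4
      have h5 : ∑ j ∈ S r \ A, (v (A ∪ {j}) - v A) ≤ ∑ j ∈ S r \ A, m j := by
        refine Finset.sum_le_sum fun j hj => ?_
        rw [hmeq j hj]
        exact hsub (C j) A j (hC j)
      have h6 := hval r
      linarith
  -- weighted sum and swap
  have swap : ∑ r, α r * (∑ j ∈ (S r) \ A, m j)
      = ∑ j ∈ Aᶜ, m j * (∑ r ∈ Finset.univ.filter (fun r : Fin h => j ∈ S r), α r) := by
    have hfil : ∀ r, (S r) \ A = Aᶜ.filter (fun j => j ∈ S r) := by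
      intro r; ext x; simp [and_comm]
    calc ∑ r, α r * (∑ j ∈ (S r) \ A, m j)
        = ∑ r, ∑ j ∈ Aᶜ, (if j ∈ S r then α r * m j else 0) := by
          refine Finset.sum_congr rfl fun r _ => ?_
          rw [hfil r, Finset.mul_sum, Finset.sum_filter]
      _ = ∑ j ∈ Aᶜ, ∑ r, (if j ∈ S r then α r * m j else 0) := Finset.sum_comm
      _ = ∑ j ∈ Aᶜ, m j * (∑ r ∈ Finset.univ.filter (fun r : Fin h => j ∈ S r), α r) := by
          refine Finset.sum_congr rfl fun j _ => ?_
          rw [Finset.sum_filter, Finset.mul_sum]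
          exact Finset.sum_congr rfl fun r _ => by split <;> ring
  have lhs_ge : 2 * (n : ℝ) * b / 3 ≤ ∑ r, α r * (∑ j ∈ (S r) \ A, m j) := by
    calc 2 * (n : ℝ) * b / 3 = ∑ r, α r * (2 * (n : ℝ) * b / 3) := by
          rw [← Finset.sum_mul, hαsum, one_mul]
      _ ≤ ∑ r, α r * (∑ j ∈ (S r) \ A, m j) :=
          Finset.sum_le_sum fun r _ => mul_le_mul_of_nonneg_left (perr r) (hα r).le
  have rhs_le : ∑ j ∈ Aᶜ, m j * (∑ r ∈ Finset.univ.filter (fun r : Fin h => j ∈ S r), α r)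
      ≤ b * ∑ j ∈ Aᶜ, m j := by
    rw [Finset.mul_sum]
    refine Finset.sum_le_sum fun j _ => ?_
    rw [mul_comm b]
    exact mul_le_mul_of_nonneg_left (hcov j) (hm0 j)
  have final : 2 * (n : ℝ) * b / 3 ≤ b * ∑ j ∈ Aᶜ, m j := by
    rw [swap] at lhs_ge; linarith
  have : 2 * (n : ℝ) / 3 ≤ ∑ j ∈ Aᶜ, m j := by
    rw [← mul_le_mul_iff_right₀ hb0]
    linarith
  exact this
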